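/- Let K be a field, n a positive integer, and G ⊆ GL_n(K) a finite subgroup. Then the invariant field K(V ⊕ V*)^G, i.e. the fixed field of G acting on the fraction field K(x_1,…,x_n,y_1,…,y_n), is generated as a field extension of K by the union of the invariant rings K[x_1,…,x_n]^G and K[y_1,…,y_n]^G together with the single element u_0 := Σ_{j=1}^n x_j y_j. -/

import Mathlib

open MvPolynomial Matrix

set_option synthInstance.maxHeartbeats 1000000
set_option maxHeartbeats 1000000

variable (K : Type) [Field K] (n : ℕ)

noncomputable def gact (σ : GL (Fin n) K) :
    MvPolynomial (Fin n ⊕ Fin n) K →ₐ[K] MvPolynomial (Fin n ⊕ Fin n) K :=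
  aeval (Sum.elim
    (fun j => ∑ i : Fin n, C ((σ : Matrix (Fin n) (Fin n) K) i j) * X (Sum.inl i))
    (fun j => ∑ i : Fin n,
      C (((σ⁻¹ : GL (Fin n) K) : Matrix (Fin n) (Fin n) K) j i) * X (Sum.inr i)))

lemma gact_comp (σ τ : GL (Fin n) K) :
    (gact K n σ).comp (gact K n τ) = gact K n (σ * τ) := by
  apply algHom_ext
  rintro (j | j)
  · simp only [gact, AlgHom.comp_apply, aeval_X, Sum.elim_inl, map_sum, _root_.map_mul,
      aeval_C, algebraMap_eq]
    rw [Units.val_mul]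
    simp only [Matrix.mul_apply, map_sum, _root_.map_mul, Finset.sum_mul, Finset.mul_sum]
    rw [Finset.sum_comm]
    refine Finset.sum_congr rfl fun i _ => Finset.sum_congr rfl fun i' _ => ?_
    ring
  · simp only [gact, AlgHom.comp_apply, aeval_X, Sum.elim_inr, map_sum, _root_.map_mul,
      aeval_C, algebraMap_eq]
    rw [_root_.mul_inv_rev, Units.val_mul]
    simp only [Matrix.mul_apply, map_sum, _root_.map_mul, Finset.sum_mul, Finset.mul_sum]
    rw [Finset.sum_comm]
    refine Finset.sum_congr rfl fun i _ => Finset.sum_congr rfl fun i' _ => ?_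
    ring

lemma gact_one : gact K n 1 = AlgHom.id K _ := by
  apply algHom_ext
  rintro (j | j) <;>
    simp [gact, Matrix.one_apply, apply_ite (C : K → MvPolynomial (Fin n ⊕ Fin n) K),
      Finset.sum_ite_eq]

noncomputable def gactEquiv (σ : GL (Fin n) K) :
    MvPolynomial (Fin n ⊕ Fin n) K ≃ₐ[K] MvPolynomial (Fin n ⊕ Fin n) K :=
  AlgEquiv.ofAlgHom (gact K n σ) (gact K n σ⁻¹)
    (by rw [gact_comp, mul_inv_cancel, gact_one])
    (by rw [gact_comp, inv_mul_cancel, gact_one])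

noncomputable def gactFrac (σ : GL (Fin n) K) :
    FractionRing (MvPolynomial (Fin n ⊕ Fin n) K) ≃ₐ[K]
      FractionRing (MvPolynomial (Fin n ⊕ Fin n) K) :=
  IsFractionRing.algEquivOfAlgEquiv (gactEquiv K n σ)


noncomputable def gact2 (σ τ : GL (Fin n) K) :
    MvPolynomial (Fin n ⊕ Fin n) K →ₐ[K] MvPolynomial (Fin n ⊕ Fin n) K :=
  aeval (Sum.elim
    (fun j => ∑ i : Fin n, C ((σ : Matrix (Fin n) (Fin n) K) i j) * X (Sum.inl i))
    (fun j => ∑ i : Fin n,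
      C (((τ⁻¹ : GL (Fin n) K) : Matrix (Fin n) (Fin n) K) j i) * X (Sum.inr i)))

lemma gact2_diag (σ : GL (Fin n) K) : gact2 K n σ σ = gact K n σ := rfl

lemma gact2_comp (σ τ σ' τ' : GL (Fin n) K) :
    (gact2 K n σ τ).comp (gact2 K n σ' τ') = gact2 K n (σ * σ') (τ * τ') := by
  apply algHom_ext
  rintro (j | j)
  · simp only [gact2, AlgHom.comp_apply, aeval_X, Sum.elim_inl, map_sum, _root_.map_mul,
      aeval_C, algebraMap_eq]
    rw [Units.val_mul]
    simp only [Matrix.mul_apply, map_sum, _root_.map_mul, Finset.sum_mul, Finset.mul_sum]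
    rw [Finset.sum_comm]
    refine Finset.sum_congr rfl fun i _ => Finset.sum_congr rfl fun i' _ => ?_
    ring
  · simp only [gact2, AlgHom.comp_apply, aeval_X, Sum.elim_inr, map_sum, _root_.map_mul,
      aeval_C, algebraMap_eq]
    rw [_root_.mul_inv_rev, Units.val_mul]
    simp only [Matrix.mul_apply, map_sum, _root_.map_mul, Finset.sum_mul, Finset.mul_sum]
    rw [Finset.sum_comm]
    refine Finset.sum_congr rfl fun i _ => Finset.sum_congr rfl fun i' _ => ?_
    ring

lemma gact2_one : gact2 K n 1 1 = AlgHom.id K _ := by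
  rw [gact2_diag, gact_one]

noncomputable def gact2Equiv (σ τ : GL (Fin n) K) :
    MvPolynomial (Fin n ⊕ Fin n) K ≃ₐ[K] MvPolynomial (Fin n ⊕ Fin n) K :=
  AlgEquiv.ofAlgHom (gact2 K n σ τ) (gact2 K n σ⁻¹ τ⁻¹)
    (by rw [gact2_comp, mul_inv_cancel, mul_inv_cancel, gact2_one])
    (by rw [gact2_comp, inv_mul_cancel, inv_mul_cancel, gact2_one])

lemma gact2Equiv_diag (σ : GL (Fin n) K) : gact2Equiv K n σ σ = gactEquiv K n σ := by
  apply AlgEquiv.ext; intro p; rfl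

noncomputable def gact2Frac (σ τ : GL (Fin n) K) :
    FractionRing (MvPolynomial (Fin n ⊕ Fin n) K) ≃ₐ[K]
      FractionRing (MvPolynomial (Fin n ⊕ Fin n) K) :=
  IsFractionRing.algEquivOfAlgEquiv (gact2Equiv K n σ τ)

lemma gact2Frac_diag (σ : GL (Fin n) K) : gact2Frac K n σ σ = gactFrac K n σ := by
  rw [gact2Frac, gact2Equiv_diag]; rfl

lemma gact2Frac_algebraMap (σ τ : GL (Fin n) K) (p : MvPolynomial (Fin n ⊕ Fin n) K) :
    gact2Frac K n σ τ (algebraMap _ _ p) = algebraMap _ _ (gact2 K n σ τ p) :=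
  IsFractionRing.algEquivOfAlgEquiv_algebraMap _ _

lemma gactFrac_algebraMap (σ : GL (Fin n) K) (p : MvPolynomial (Fin n ⊕ Fin n) K) :
    gactFrac K n σ (algebraMap _ _ p) = algebraMap _ _ (gact K n σ p) := by
  rw [← gact2Frac_diag, gact2Frac_algebraMap, gact2_diag]

lemma fracEquiv_ext {e e' : FractionRing (MvPolynomial (Fin n ⊕ Fin n) K) ≃ₐ[K]
      FractionRing (MvPolynomial (Fin n ⊕ Fin n) K)}
    (h : ∀ p : MvPolynomial (Fin n ⊕ Fin n) K,
      e (algebraMap _ _ p) = e' (algebraMap _ _ p)) : e = e' := by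
  have : (e : FractionRing (MvPolynomial (Fin n ⊕ Fin n) K) →+*
      FractionRing (MvPolynomial (Fin n ⊕ Fin n) K)) = e' :=
    IsLocalization.ringHom_ext (nonZeroDivisors (MvPolynomial (Fin n ⊕ Fin n) K))
      (RingHom.ext h)
  exact AlgEquiv.ext fun z => DFunLike.congr_fun this z

/-- The `GL × GL` action on the fraction field, as a monoid hom into algebra
automorphisms. -/
noncomputable def fracHom :
    (GL (Fin n) K × GL (Fin n) K) →*
      (FractionRing (MvPolynomial (Fin n ⊕ Fin n) K) ≃ₐ[K]
        FractionRing (MvPolynomial (Fin n ⊕ Fin n) K)) where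
  toFun p := gact2Frac K n p.1 p.2
  map_one' := by
    refine fracEquiv_ext K n fun p => ?_
    simp only [Prod.fst_one, Prod.snd_one]
    rw [gact2Frac_algebraMap, gact2_one]; rfl
  map_mul' p q := by
    refine fracEquiv_ext K n fun r => ?_
    show gact2Frac K n _ _ (algebraMap _ _ r)
      = gact2Frac K n p.1 p.2 (gact2Frac K n q.1 q.2 (algebraMap _ _ r))
    rw [gact2Frac_algebraMap, gact2Frac_algebraMap, gact2Frac_algebraMap,
      ← AlgHom.comp_apply, gact2_comp]
    rfl


lemma gact2_Xl (σ τ : GL (Fin n) K) (j : Fin n) :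
    gact2 K n σ τ (X (Sum.inl j)) =
      ∑ i : Fin n, C ((σ : Matrix (Fin n) (Fin n) K) i j) * X (Sum.inl i) := by
  simp [gact2]

lemma gact2_Xr (σ τ : GL (Fin n) K) (j : Fin n) :
    gact2 K n σ τ (X (Sum.inr j)) =
      ∑ i : Fin n, C (((τ⁻¹ : GL (Fin n) K) : Matrix (Fin n) (Fin n) K) j i)
        * X (Sum.inr i) := by
  simp [gact2]

/-- If `∑ i, C (f i) * X (emb i) = X (emb j)` with `emb` injective, the coefficients are
the Kronecker delta. -/
lemma delta_of_sum_C_mul_X_eq (f : Fin n → K) (j : Fin n) (emb : Fin n → Fin n ⊕ Fin n)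
    (hemb : Function.Injective emb)
    (h : (∑ i : Fin n, C (f i) * X (emb i) : MvPolynomial (Fin n ⊕ Fin n) K) = X (emb j))
    (i : Fin n) : f i = if i = j then 1 else 0 := by
  classical
  have := congrArg (coeff (Finsupp.single (emb i) 1)) h
  rw [coeff_sum] at this
  simp only [coeff_C_mul, coeff_X'] at this
  have hsingle : ∀ i' : Fin n,
      (Finsupp.single (emb i') 1 = Finsupp.single (emb i) 1) ↔ i' = i := by
    intro i'
    rw [Finsupp.single_left_inj one_ne_zero]
    exact ⟨fun hh => hemb hh, fun hh => by rw [hh]⟩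
  rw [Finset.sum_congr rfl (fun i' _ =>
    congrArg (f i' * ·) (if_congr (hsingle i') rfl rfl))] at this
  simp only [mul_ite, mul_one, mul_zero, Finset.sum_ite_eq', Finset.mem_univ,
    if_true] at this
  rw [this, if_congr (hsingle j) rfl rfl]
  rcases eq_or_ne i j with hij | hij
  · simp [hij]
  · rw [if_neg (Ne.symm hij), if_neg hij]

/-- An element `(σ, τ)` acting trivially on the polynomial ring is trivial. -/
lemma gact2_faithful (σ τ : GL (Fin n) K)
    (h : ∀ p : MvPolynomial (Fin n ⊕ Fin n) K, gact2 K n σ τ p = p) : σ = 1 ∧ τ = 1 := by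
  classical
  constructor
  · refine Units.ext (Matrix.ext fun i j => ?_)
    have h1 := h (X (Sum.inl j))
    rw [gact2_Xl] at h1
    have := delta_of_sum_C_mul_X_eq K n _ j Sum.inl (fun _ _ hh => Sum.inl.inj hh) h1 i
    simpa [Matrix.one_apply] using this
  · have : τ⁻¹ = 1 := by
      refine Units.ext (Matrix.ext fun j i => ?_)
      have h1 := h (X (Sum.inr j))
      rw [gact2_Xr] at h1
      -- here the roles: coefficient function is `fun i => (τ⁻¹) j i`
      have := delta_of_sum_C_mul_X_eq K n
        (fun i => ((τ⁻¹ : GL (Fin n) K) : Matrix (Fin n) (Fin n) K) j i) j Sum.inr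
        (fun _ _ hh => Sum.inr.inj hh) h1 i
      simpa [Matrix.one_apply, eq_comm] using this
    simpa using congrArg (·⁻¹) this

variable (G : Subgroup (GL (Fin n) K))

set_option synthInstance.maxHeartbeats 1000000 in
/-- The action of the product subgroup `G × G` on the fraction field. -/
noncomputable instance prodAction :
    MulSemiringAction ↥(G.prod G) (FractionRing (MvPolynomial (Fin n ⊕ Fin n) K)) :=
  MulSemiringAction.compHom _ ((fracHom K n).comp (G.prod G).subtype)

set_option synthInstance.maxHeartbeats 1000000 in
lemma prodAction_smul_def (h : ↥(G.prod G))
    (z : FractionRing (MvPolynomial (Fin n ⊕ Fin n) K)) :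
    h • z = gact2Frac K n (h : GL (Fin n) K × GL (Fin n) K).1
      (h : GL (Fin n) K × GL (Fin n) K).2 z := rfl

set_option synthInstance.maxHeartbeats 1000000 in
lemma prodAction_faithful :
    FaithfulSMul ↥(G.prod G) (FractionRing (MvPolynomial (Fin n ⊕ Fin n) K)) := by
  constructor
  intro h₁ h₂ hh
  have key : ∀ p : MvPolynomial (Fin n ⊕ Fin n) K,
      gact2 K n ((h₁ : GL (Fin n) K × GL (Fin n) K).1 * ((h₂ : GL (Fin n) K × GL (Fin n) K).1)⁻¹)
        ((h₁ : GL (Fin n) K × GL (Fin n) K).2 * ((h₂ : GL (Fin n) K × GL (Fin n) K).2)⁻¹) p = p := by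
    intro p
    have h3 := hh (algebraMap (MvPolynomial (Fin n ⊕ Fin n) K) _ (gact2 K n
      ((h₂ : GL (Fin n) K × GL (Fin n) K).1)⁻¹ ((h₂ : GL (Fin n) K × GL (Fin n) K).2)⁻¹ p))
    rw [prodAction_smul_def, prodAction_smul_def, gact2Frac_algebraMap, gact2Frac_algebraMap,
      ← AlgHom.comp_apply, ← AlgHom.comp_apply, gact2_comp, gact2_comp,
      mul_inv_cancel, mul_inv_cancel, gact2_one] at h3
    have h4 := IsFractionRing.injective (MvPolynomial (Fin n ⊕ Fin n) K)
      (FractionRing (MvPolynomial (Fin n ⊕ Fin n) K)) h3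
    simpa using h4
  obtain ⟨e1, e2⟩ := gact2_faithful K n _ _ key
  have : (h₁ : GL (Fin n) K × GL (Fin n) K) = (h₂ : GL (Fin n) K × GL (Fin n) K) := by
    apply Prod.ext
    · exact mul_inv_eq_one.mp e1
    · exact mul_inv_eq_one.mp e2
  exact Subtype.ext this

lemma prod_finite (hG : Finite G) : Finite ↥(G.prod G) :=
  Finite.of_equiv _ (Subgroup.prodEquiv G G).symm.toEquiv


/-- The `x`-type action on a single polynomial ring. -/
noncomputable def xact (σ : GL (Fin n) K) :
    MvPolynomial (Fin n) K →ₐ[K] MvPolynomial (Fin n) K :=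
  aeval (fun j => ∑ i : Fin n, C ((σ : Matrix (Fin n) (Fin n) K) i j) * X i)

/-- The `y`-type (contragredient) action on a single polynomial ring. -/
noncomputable def yact (τ : GL (Fin n) K) :
    MvPolynomial (Fin n) K →ₐ[K] MvPolynomial (Fin n) K :=
  aeval (fun j => ∑ i : Fin n,
    C (((τ⁻¹ : GL (Fin n) K) : Matrix (Fin n) (Fin n) K) j i) * X i)

lemma gact2_rename_inl (σ τ : GL (Fin n) K) (p : MvPolynomial (Fin n) K) :
    gact2 K n σ τ (rename Sum.inl p) = rename Sum.inl (xact K n σ p) := by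
  have : (gact2 K n σ τ).comp (rename Sum.inl) =
      (rename (Sum.inl : Fin n → Fin n ⊕ Fin n)).comp (xact K n σ) := by
    apply algHom_ext
    intro j
    simp [gact2, xact]
  exact DFunLike.congr_fun this p

lemma gact2_rename_inr (σ τ : GL (Fin n) K) (p : MvPolynomial (Fin n) K) :
    gact2 K n σ τ (rename Sum.inr p) = rename Sum.inr (yact K n τ p) := by
  have : (gact2 K n σ τ).comp (rename Sum.inr) =
      (rename (Sum.inr : Fin n → Fin n ⊕ Fin n)).comp (yact K n τ) := by
    apply algHom_ext
    intro j
    simp [gact2, yact]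
  exact DFunLike.congr_fun this p

lemma gact2_u0 (σ τ : GL (Fin n) K) :
    gact2 K n σ τ (∑ j : Fin n, X (Sum.inl j) * X (Sum.inr j)) =
      ∑ i : Fin n, ∑ k : Fin n,
        C (((σ : Matrix (Fin n) (Fin n) K) *
            ((τ⁻¹ : GL (Fin n) K) : Matrix (Fin n) (Fin n) K)) i k) *
          (X (Sum.inl i) * X (Sum.inr k)) := by
  rw [map_sum]
  rw [Finset.sum_congr rfl (fun j _ => by
    rw [_root_.map_mul, gact2_Xl, gact2_Xr, Finset.sum_mul_sum])]
  rw [Finset.sum_comm]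
  refine Finset.sum_congr rfl fun i _ => ?_
  rw [Finset.sum_comm]
  refine Finset.sum_congr rfl fun k _ => ?_
  rw [Matrix.mul_apply, map_sum, Finset.sum_mul]
  refine Finset.sum_congr rfl fun j _ => ?_
  rw [C_mul]
  ring

lemma gact_u0 (σ : GL (Fin n) K) :
    gact K n σ (∑ j : Fin n, X (Sum.inl j) * X (Sum.inr j)) =
      ∑ j : Fin n, X (Sum.inl j) * X (Sum.inr j) := by
  rw [← gact2_diag, gact2_u0]
  have h1 : (σ : Matrix (Fin n) (Fin n) K) *
      ((σ⁻¹ : GL (Fin n) K) : Matrix (Fin n) (Fin n) K) = 1 := by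
    rw [← Units.val_mul, mul_inv_cancel, Units.val_one]
  rw [h1]
  classical
  simp [Matrix.one_apply, apply_ite (C : K → MvPolynomial (Fin n ⊕ Fin n) K),
    ite_mul, Finset.sum_ite_eq]

lemma eq_of_gact2_u0 (σ τ : GL (Fin n) K)
    (h : gact2 K n σ τ (∑ j : Fin n, X (Sum.inl j) * X (Sum.inr j)) =
      ∑ j : Fin n, X (Sum.inl j) * X (Sum.inr j)) : σ = τ := by
  classical
  rw [gact2_u0] at h
  have hM : (σ : Matrix (Fin n) (Fin n) K) *
      ((τ⁻¹ : GL (Fin n) K) : Matrix (Fin n) (Fin n) K) = 1 := by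
    ext i k
    have := congrArg (eval (Sum.elim (fun a => if a = i then (1:K) else 0)
      (fun b => if b = k then (1:K) else 0))) h
    simp only [map_sum, _root_.map_mul, eval_C, eval_X, Sum.elim_inl, Sum.elim_inr,
      mul_ite, ite_mul, mul_one, mul_zero, one_mul, zero_mul, Finset.sum_ite_eq,
      Finset.sum_ite_eq', Finset.mem_univ, if_true] at this
    rw [this]
    rcases eq_or_ne i k with hik | hik
    · simp [hik, Matrix.one_apply]
    · simp [Matrix.one_apply, hik, Ne.symm hik]
  have : σ * τ⁻¹ = 1 := Units.ext (by rw [Units.val_mul]; exact hM)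
  exact mul_inv_eq_one.mp this

/-- `x`-invariants of a single polynomial ring, as a subalgebra. -/
noncomputable def xInvAlg (G : Subgroup (GL (Fin n) K)) :
    Subalgebra K (MvPolynomial (Fin n) K) where
  carrier := {a | ∀ σ ∈ G, xact K n σ a = a}
  mul_mem' := fun ha hb σ hσ => by rw [_root_.map_mul, ha σ hσ, hb σ hσ]
  add_mem' := fun ha hb σ hσ => by rw [map_add, ha σ hσ, hb σ hσ]
  algebraMap_mem' := fun c σ hσ => by simp [algebraMap_eq]

/-- `y`-invariants of a single polynomial ring, as a subalgebra. -/
noncomputable def yInvAlg (G : Subgroup (GL (Fin n) K)) :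
    Subalgebra K (MvPolynomial (Fin n) K) where
  carrier := {a | ∀ τ ∈ G, yact K n τ a = a}
  mul_mem' := fun ha hb σ hσ => by rw [_root_.map_mul, ha σ hσ, hb σ hσ]
  add_mem' := fun ha hb σ hσ => by rw [map_add, ha σ hσ, hb σ hσ]
  algebraMap_mem' := fun c σ hσ => by simp [algebraMap_eq]

/-- Outer `x`-action over an arbitrary coefficient algebra. -/
noncomputable def xactO (T : Type) [CommSemiring T] [Algebra K T] (σ : GL (Fin n) K) :
    MvPolynomial (Fin n) T →ₐ[T] MvPolynomial (Fin n) T :=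
  aeval (fun j => ∑ i : Fin n,
    C (algebraMap K T ((σ : Matrix (Fin n) (Fin n) K) i j)) * X i)

lemma sumToIter_gact2_y (τ : GL (Fin n) K) (p : MvPolynomial (Fin n ⊕ Fin n) K) :
    sumToIter K (Fin n) (Fin n) (gact2 K n 1 τ p) =
      MvPolynomial.map (yact K n τ).toRingHom (sumToIter K (Fin n) (Fin n) p) := by
  classical
  have : (sumToIter K (Fin n) (Fin n)).comp (gact2 K n 1 τ).toRingHom =
      (MvPolynomial.map (yact K n τ).toRingHom).comp (sumToIter K (Fin n) (Fin n)) := by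
    apply ringHom_ext
    · intro r
      simp [gact2, sumToIter_C]
    · rintro (j | j)
      · simp only [RingHom.comp_apply, AlgHom.toRingHom_eq_coe, RingHom.coe_coe]
        rw [show (gact2 K n 1 τ) (X (Sum.inl j)) = _ from gact2_Xl K n 1 τ j]
        simp [Matrix.one_apply, apply_ite (C : K → MvPolynomial (Fin n ⊕ Fin n) K),
          ite_mul, Finset.sum_ite_eq, sumToIter_Xl]
      · simp only [RingHom.comp_apply, AlgHom.toRingHom_eq_coe, RingHom.coe_coe]
        rw [show (gact2 K n 1 τ) (X (Sum.inr j)) = _ from gact2_Xr K n 1 τ j]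
        simp [sumToIter_Xr, sumToIter_C, yact, map_sum]
  exact DFunLike.congr_fun this p

lemma sumToIter_gact2_x (σ : GL (Fin n) K) (p : MvPolynomial (Fin n ⊕ Fin n) K) :
    sumToIter K (Fin n) (Fin n) (gact2 K n σ 1 p) =
      xactO K n (MvPolynomial (Fin n) K) σ (sumToIter K (Fin n) (Fin n) p) := by
  classical
  have : (sumToIter K (Fin n) (Fin n)).comp (gact2 K n σ 1).toRingHom =
      (xactO K n (MvPolynomial (Fin n) K) σ).toRingHom.comp
        (sumToIter K (Fin n) (Fin n)) := by
    apply ringHom_ext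
    · intro r
      simp [gact2, sumToIter_C, xactO, algebraMap_eq]
    · rintro (j | j)
      · simp only [RingHom.comp_apply, AlgHom.toRingHom_eq_coe, RingHom.coe_coe]
        rw [show (gact2 K n σ 1) (X (Sum.inl j)) = _ from gact2_Xl K n σ 1 j]
        simp [sumToIter_Xl, sumToIter_C, xactO, map_sum, algebraMap_eq]
      · simp only [RingHom.comp_apply, AlgHom.toRingHom_eq_coe, RingHom.coe_coe]
        rw [show (gact2 K n σ 1) (X (Sum.inr j)) = _ from gact2_Xr K n σ 1 j]
        simp [sumToIter_Xr, sumToIter_C, xactO, Matrix.one_apply,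
          apply_ite (C : K → MvPolynomial (Fin n) K), ite_mul, Finset.sum_ite_eq]
  exact DFunLike.congr_fun this p

lemma exists_map_eq_of_coeff_mem (S : Subalgebra K (MvPolynomial (Fin n) K))
    (q : MvPolynomial (Fin n) (MvPolynomial (Fin n) K)) (h : ∀ m, q.coeff m ∈ S) :
    ∃ q' : MvPolynomial (Fin n) ↥S, MvPolynomial.map S.val.toRingHom q' = q := by
  classical
  refine ⟨∑ m ∈ q.support, monomial m ⟨q.coeff m, h m⟩, ?_⟩
  rw [map_sum]
  simp only [map_monomial]
  exact (as_sum q).symm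

lemma map_val_xactO (S : Subalgebra K (MvPolynomial (Fin n) K)) (σ : GL (Fin n) K)
    (q : MvPolynomial (Fin n) ↥S) :
    MvPolynomial.map S.val.toRingHom (xactO K n ↥S σ q) =
      xactO K n (MvPolynomial (Fin n) K) σ (MvPolynomial.map S.val.toRingHom q) := by
  have : (MvPolynomial.map S.val.toRingHom).comp (xactO K n ↥S σ).toRingHom =
      (xactO K n (MvPolynomial (Fin n) K) σ).toRingHom.comp
        (MvPolynomial.map S.val.toRingHom) := by
    apply ringHom_ext
    · intro s
      simp [xactO]
    · intro j
      simp [xactO, map_sum]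
  exact DFunLike.congr_fun this q

lemma xactO_map_algebraMap (S : Subalgebra K (MvPolynomial (Fin n) K)) (σ : GL (Fin n) K)
    (r : MvPolynomial (Fin n) K) :
    xactO K n ↥S σ (MvPolynomial.map (algebraMap K ↥S) r) =
      MvPolynomial.map (algebraMap K ↥S) (xact K n σ r) := by
  have : (xactO K n ↥S σ).toRingHom.comp (MvPolynomial.map (algebraMap K ↥S)) =
      (MvPolynomial.map (algebraMap K ↥S)).comp (xact K n σ).toRingHom := by
    apply ringHom_ext
    · intro c
      simp [xactO, xact, algebraMap_eq]
    · intro j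
      simp [xactO, xact, map_sum]
  exact DFunLike.congr_fun this r

lemma indep_decomposition (S : Subalgebra K (MvPolynomial (Fin n) K))
    (t : Finset (Module.Basis.ofVectorSpaceIndex K ↥S)) (e : (Module.Basis.ofVectorSpaceIndex K ↥S) →
      MvPolynomial (Fin n) K)
    (h : (∑ k ∈ t, (C (Module.Basis.ofVectorSpace K ↥S k) : MvPolynomial (Fin n) ↥S) *
      MvPolynomial.map (algebraMap K ↥S) (e k)) = 0) :
    ∀ k ∈ t, e k = 0 := by
  classical
  intro k hk
  ext m
  have h2 := congrArg (coeff m) h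
  rw [coeff_sum] at h2
  simp only [coeff_C_mul, coeff_map, coeff_zero] at h2
  have h3 : ∑ k ∈ t, (coeff m (e k)) • (Module.Basis.ofVectorSpace K ↥S k) = 0 := by
    rw [← h2]
    refine Finset.sum_congr rfl fun k' _ => ?_
    rw [Algebra.smul_def]
    ring
  have h4 := linearIndependent_iff'.mp (Module.Basis.ofVectorSpace K ↥S).linearIndependent
    t _ h3 k hk
  simpa using h4

lemma exists_decomposition (S : Subalgebra K (MvPolynomial (Fin n) K))
    (q : MvPolynomial (Fin n) ↥S) :
    ∃ (t : Finset (Module.Basis.ofVectorSpaceIndex K ↥S))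
      (d : (Module.Basis.ofVectorSpaceIndex K ↥S) → MvPolynomial (Fin n) K),
      q = ∑ k ∈ t, (C (Module.Basis.ofVectorSpace K ↥S k) : MvPolynomial (Fin n) ↥S) *
        MvPolynomial.map (algebraMap K ↥S) (d k) := by
  classical
  induction q using MvPolynomial.induction_on' with
  | monomial u a =>
    refine ⟨((Module.Basis.ofVectorSpace K ↥S).repr a).support,
      fun k => monomial u (((Module.Basis.ofVectorSpace K ↥S).repr a) k), ?_⟩
    have ha := (Module.Basis.ofVectorSpace K ↥S).linearCombination_repr a
    rw [Finsupp.linearCombination_apply, Finsupp.sum] at ha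
    calc monomial u a = monomial u (∑ k ∈ ((Module.Basis.ofVectorSpace K ↥S).repr a).support,
          ((Module.Basis.ofVectorSpace K ↥S).repr a) k • Module.Basis.ofVectorSpace K ↥S k) := by rw [ha]
      _ = _ := by
          rw [map_sum]
          refine Finset.sum_congr rfl fun k _ => ?_
          rw [map_monomial, C_mul_monomial, Algebra.smul_def, mul_comm]
  | add p q hp hq =>
    obtain ⟨t₁, d₁, h₁⟩ := hp
    obtain ⟨t₂, d₂, h₂⟩ := hq
    refine ⟨t₁ ∪ t₂, fun k =>
      (if k ∈ t₁ then d₁ k else 0) + (if k ∈ t₂ then d₂ k else 0), ?_⟩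
    have e1 : ∑ k ∈ t₁ ∪ t₂, (C (Module.Basis.ofVectorSpace K ↥S k) : MvPolynomial (Fin n) ↥S) *
        MvPolynomial.map (algebraMap K ↥S) (if k ∈ t₁ then d₁ k else 0) = p := by
      rw [← Finset.sum_subset Finset.subset_union_left
        (fun k _ hk => by rw [if_neg hk]; simp)]
      rw [h₁]
      exact Finset.sum_congr rfl fun k hk => by rw [if_pos hk]
    have e2 : ∑ k ∈ t₁ ∪ t₂, (C (Module.Basis.ofVectorSpace K ↥S k) : MvPolynomial (Fin n) ↥S) *
        MvPolynomial.map (algebraMap K ↥S) (if k ∈ t₂ then d₂ k else 0) = q := by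
      rw [← Finset.sum_subset Finset.subset_union_right
        (fun k _ hk => by rw [if_neg hk]; simp)]
      rw [h₂]
      exact Finset.sum_congr rfl fun k hk => by rw [if_pos hk]
    simp only [map_add, mul_add, Finset.sum_add_distrib, e1, e2]


lemma mem_xInvAlg_iff (G : Subgroup (GL (Fin n) K)) (a : MvPolynomial (Fin n) K) :
    a ∈ xInvAlg K n G ↔ ∀ σ ∈ G, xact K n σ a = a := Iff.rfl

lemma mem_yInvAlg_iff (G : Subgroup (GL (Fin n) K)) (a : MvPolynomial (Fin n) K) :
    a ∈ yInvAlg K n G ↔ ∀ τ ∈ G, yact K n τ a = a := Iff.rfl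

lemma iterToSum_sumToIter (p : MvPolynomial (Fin n ⊕ Fin n) K) :
    iterToSum K (Fin n) (Fin n) (sumToIter K (Fin n) (Fin n) p) = p := by
  induction p using MvPolynomial.induction_on with
  | C a => simp [sumToIter_C, iterToSum_C_C]
  | add p q hp hq => simp only [map_add, hp, hq]
  | mul_X p i hp =>
    rcases i with i | i
    · simp only [map_mul, hp, sumToIter_Xl, iterToSum_X]
    · simp only [map_mul, hp, sumToIter_Xr, iterToSum_C_X]

lemma iterToSum_C' (a : MvPolynomial (Fin n) K) :
    iterToSum K (Fin n) (Fin n) (C a) = rename Sum.inr a := by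
  have : (iterToSum K (Fin n) (Fin n)).comp (C : MvPolynomial (Fin n) K →+* _) =
      (rename (Sum.inr : Fin n → Fin n ⊕ Fin n)).toRingHom := by
    apply ringHom_ext
    · intro c
      simp [iterToSum_C_C]
    · intro i
      simp [iterToSum_C_X]
  exact DFunLike.congr_fun this a

lemma iterToSum_map_C (d : MvPolynomial (Fin n) K) :
    iterToSum K (Fin n) (Fin n)
        (MvPolynomial.map (C : K →+* MvPolynomial (Fin n) K) d) =
      rename Sum.inl d := by
  have : (iterToSum K (Fin n) (Fin n)).comp
      (MvPolynomial.map (C : K →+* MvPolynomial (Fin n) K)) =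
      (rename (Sum.inl : Fin n → Fin n ⊕ Fin n)).toRingHom := by
    apply ringHom_ext
    · intro c
      simp [iterToSum_C_C]
    · intro i
      simp [iterToSum_X]
  exact DFunLike.congr_fun this d

/-- Key decomposition: a `G × G`-invariant polynomial lies in the subalgebra generated
by the `x`-invariants and the `y`-invariants. -/
lemma invariant_mem_adjoin (G : Subgroup (GL (Fin n) K))
    (P : MvPolynomial (Fin n ⊕ Fin n) K)
    (hP : ∀ σ ∈ G, ∀ τ ∈ G, gact2 K n σ τ P = P) :
    P ∈ Algebra.adjoin K
      ({p | (∃ p₀ : MvPolynomial (Fin n) K, p = rename Sum.inl p₀) ∧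
          ∀ σ ∈ G, gact K n σ p = p} ∪
        {p | (∃ p₀ : MvPolynomial (Fin n) K, p = rename Sum.inr p₀) ∧
          ∀ σ ∈ G, gact K n σ p = p}) := by
  classical
  set A := MvPolynomial (Fin n) K
  set S := yInvAlg K n G with hS
  set P' := sumToIter K (Fin n) (Fin n) P with hP'def
  have hcoeff : ∀ m, coeff m P' ∈ S := by
    intro m τ hτ
    have h1 : gact2 K n 1 τ P = P := hP 1 (one_mem G) τ hτ
    have h2 : MvPolynomial.map (yact K n τ).toRingHom P' = P' := by
      rw [hP'def, ← sumToIter_gact2_y, h1]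
    calc yact K n τ (coeff m P') = coeff m (MvPolynomial.map (yact K n τ).toRingHom P') := by
          rw [coeff_map]; rfl
      _ = coeff m P' := by rw [h2]
  obtain ⟨P'', hmap⟩ := exists_map_eq_of_coeff_mem K n S P' hcoeff
  have hPinv : ∀ σ ∈ G, xactO K n ↥S σ P'' = P'' := by
    intro σ hσ
    apply MvPolynomial.map_injective S.val.toRingHom Subtype.val_injective
    rw [map_val_xactO, hmap, hP'def, ← sumToIter_gact2_x, hP σ hσ 1 (one_mem G)]
  obtain ⟨t, d, hdec⟩ := exists_decomposition K n S P''
  have hxactSum : ∀ σ ∈ G, xactO K n ↥S σ P'' =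
      ∑ k ∈ t, (C (Module.Basis.ofVectorSpace K ↥S k) : MvPolynomial (Fin n) ↥S) *
        MvPolynomial.map (algebraMap K ↥S) (xact K n σ (d k)) := by
    intro σ hσ
    rw [hdec, map_sum]
    refine Finset.sum_congr rfl fun k _ => ?_
    rw [_root_.map_mul, xactO_map_algebraMap]
    congr 1
    simp [xactO]
  have hd : ∀ k ∈ t, ∀ σ ∈ G, xact K n σ (d k) = d k := by
    intro k hk σ hσ
    have h0 : (∑ k ∈ t, (C (Module.Basis.ofVectorSpace K ↥S k) : MvPolynomial (Fin n) ↥S) *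
        MvPolynomial.map (algebraMap K ↥S) (xact K n σ (d k) - d k)) = 0 := by
      have hdist := Finset.sum_sub_distrib (s := t)
        (f := fun x => (C ((Module.Basis.ofVectorSpace K ↥S) x) : MvPolynomial (Fin n) ↥S) *
          MvPolynomial.map (algebraMap K ↥S) (xact K n σ (d x)))
        (g := fun x => (C ((Module.Basis.ofVectorSpace K ↥S) x) : MvPolynomial (Fin n) ↥S) *
          MvPolynomial.map (algebraMap K ↥S) (d x))
      simp only [map_sub]
      rw [Finset.sum_congr rfl (fun x _ => mul_sub
        (C ((Module.Basis.ofVectorSpace K ↥S) x) : MvPolynomial (Fin n) ↥S)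
        (MvPolynomial.map (algebraMap K ↥S) (xact K n σ (d x)))
        (MvPolynomial.map (algebraMap K ↥S) (d x))), hdist,
        sub_eq_zero, ← hxactSum σ hσ, hPinv σ hσ, hdec]
    have := indep_decomposition K n S t _ h0 k hk
    rwa [sub_eq_zero] at this
  have hre : P = ∑ k ∈ t,
      rename Sum.inr ((Module.Basis.ofVectorSpace K ↥S k : A)) * rename Sum.inl (d k) := by
    have h5 : P = iterToSum K (Fin n) (Fin n) P' := by rw [hP'def, iterToSum_sumToIter]
    have h6 : (S.val.toRingHom).comp (algebraMap K ↥S) = (C : K →+* A) := by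
      ext c
      simp [algebraMap_eq]
    rw [h5, ← hmap, hdec, map_sum, map_sum]
    refine Finset.sum_congr rfl fun k _ => ?_
    rw [_root_.map_mul, _root_.map_mul, MvPolynomial.map_map, h6]
    congr 1
    · have : MvPolynomial.map S.val.toRingHom
          (C (Module.Basis.ofVectorSpace K ↥S k) : MvPolynomial (Fin n) ↥S) =
          C ((Module.Basis.ofVectorSpace K ↥S k : A)) := by
        rw [map_C]; rfl
      rw [this, iterToSum_C']
    · exact iterToSum_map_C K n (d k)
  rw [hre]
  refine Subalgebra.sum_mem _ fun k hk => Subalgebra.mul_mem _ ?_ ?_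
  · refine Algebra.subset_adjoin (Or.inr ⟨⟨(Module.Basis.ofVectorSpace K ↥S k : A), rfl⟩, ?_⟩)
    intro σ hσ
    rw [← gact2_diag, gact2_rename_inr, (Module.Basis.ofVectorSpace K ↥S k).2 σ hσ]
  · refine Algebra.subset_adjoin (Or.inl ⟨⟨d k, rfl⟩, ?_⟩)
    intro σ hσ
    rw [← gact2_diag, gact2_rename_inl, hd k hk σ hσ]


lemma exists_invariant_rep (G : Subgroup (GL (Fin n) K)) (hG : Finite G)
    (z : FractionRing (MvPolynomial (Fin n ⊕ Fin n) K))
    (hz : ∀ σ ∈ G, ∀ τ ∈ G, gact2Frac K n σ τ z = z) :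
    ∃ P Q : MvPolynomial (Fin n ⊕ Fin n) K,
      (∀ σ ∈ G, ∀ τ ∈ G, gact2 K n σ τ P = P) ∧
      (∀ σ ∈ G, ∀ τ ∈ G, gact2 K n σ τ Q = Q) ∧
      algebraMap (MvPolynomial (Fin n ⊕ Fin n) K)
        (FractionRing (MvPolynomial (Fin n ⊕ Fin n) K)) Q ≠ 0 ∧
      z * algebraMap (MvPolynomial (Fin n ⊕ Fin n) K)
        (FractionRing (MvPolynomial (Fin n ⊕ Fin n) K)) Q =
        algebraMap (MvPolynomial (Fin n ⊕ Fin n) K)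
          (FractionRing (MvPolynomial (Fin n ⊕ Fin n) K)) P := by
  classical
  letI : Finite ↥(G.prod G) := prod_finite K n G hG
  letI : Fintype ↥(G.prod G) := Fintype.ofFinite _
  obtain ⟨⟨r, s⟩, hrs⟩ := IsLocalization.surj
    (nonZeroDivisors (MvPolynomial (Fin n ⊕ Fin n) K)) z
  set act : ↥(G.prod G) → MvPolynomial (Fin n ⊕ Fin n) K →ₐ[K]
      MvPolynomial (Fin n ⊕ Fin n) K :=
    fun h => gact2 K n (h : GL (Fin n) K × GL (Fin n) K).1
      (h : GL (Fin n) K × GL (Fin n) K).2 with hact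
  have act_nonzero : ∀ (h : ↥(G.prod G)) (p : MvPolynomial (Fin n ⊕ Fin n) K),
      p ≠ 0 → act h p ≠ 0 := by
    intro h p hp hc
    apply hp
    have heq : act h p = gact2Equiv K n (h : GL (Fin n) K × GL (Fin n) K).1
        (h : GL (Fin n) K × GL (Fin n) K).2 p := rfl
    apply (gact2Equiv K n (h : GL (Fin n) K × GL (Fin n) K).1
      (h : GL (Fin n) K × GL (Fin n) K).2).injective
    rw [← heq, hc, map_zero]
  set Q : MvPolynomial (Fin n ⊕ Fin n) K := ∏ h : ↥(G.prod G), act h (s : _) with hQ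
  set Q₁ : MvPolynomial (Fin n ⊕ Fin n) K :=
    ∏ h ∈ (Finset.univ.erase (1 : ↥(G.prod G))), act h (s : _) with hQ₁
  have hsplit : Q = (s : MvPolynomial (Fin n ⊕ Fin n) K) * Q₁ := by
    rw [hQ, ← Finset.mul_prod_erase Finset.univ _ (Finset.mem_univ (1 : ↥(G.prod G)))]
    congr 1
    show gact2 K n 1 1 _ = _
    rw [gact2_one]
    rfl
  have hQinv : ∀ σ ∈ G, ∀ τ ∈ G, gact2 K n σ τ Q = Q := by
    intro σ hσ τ hτ
    have hmem : ((σ, τ) : GL (Fin n) K × GL (Fin n) K) ∈ G.prod G := ⟨hσ, hτ⟩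
    set h₀ : ↥(G.prod G) := ⟨(σ, τ), hmem⟩ with hh₀
    calc gact2 K n σ τ Q = ∏ h : ↥(G.prod G), act (h₀ * h) (s : _) := by
          rw [hQ, map_prod]
          refine Finset.prod_congr rfl fun h _ => ?_
          show (gact2 K n σ τ) (act h (s : _)) = _
          rw [hact]
          rw [← AlgHom.comp_apply, gact2_comp]
          rfl
      _ = Q := by
          rw [hQ]
          exact Fintype.prod_equiv (Equiv.mulLeft h₀) _ _ (fun h => rfl)
  have hs0 : (s : MvPolynomial (Fin n ⊕ Fin n) K) ≠ 0 :=
    nonZeroDivisors.coe_ne_zero s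
  have hQ0 : Q ≠ 0 := by
    rw [hQ]
    rw [Finset.prod_ne_zero_iff]
    exact fun h _ => act_nonzero h _ hs0
  have hQL : algebraMap (MvPolynomial (Fin n ⊕ Fin n) K)
      (FractionRing (MvPolynomial (Fin n ⊕ Fin n) K)) Q ≠ 0 := by
    rw [Ne, map_eq_zero_iff _ (IsFractionRing.injective _ _)]
    exact hQ0
  refine ⟨r * Q₁, Q, ?_, hQinv, hQL, ?_⟩
  · -- invariance of P, via invariance of its image in the fraction field
    intro σ hσ τ hτ
    apply IsFractionRing.injective (MvPolynomial (Fin n ⊕ Fin n) K)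
      (FractionRing (MvPolynomial (Fin n ⊕ Fin n) K))
    have hzQ : algebraMap (MvPolynomial (Fin n ⊕ Fin n) K)
        (FractionRing (MvPolynomial (Fin n ⊕ Fin n) K)) (r * Q₁) =
        z * algebraMap _ _ Q := by
      rw [hsplit, _root_.map_mul, _root_.map_mul, ← hrs]
      ring
    rw [← gact2Frac_algebraMap, hzQ, _root_.map_mul, hz σ hσ τ hτ,
      gact2Frac_algebraMap, hQinv σ hσ τ hτ, ← hzQ]
  · rw [hsplit, _root_.map_mul, _root_.map_mul, ← hrs]
    ring

/-- Proposition 1.1: for a finite subgroup `G ⊆ GL_n(K)`, the invariant field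
`K(V ⊕ V*)^G` is generated, as a field extension of `K`, by the invariant rings
`K[V]^G = K[x_1,…,x_n]^G` and `K[V*]^G = K[y_1,…,y_n]^G` together with
`u_0 = ∑_j x_j y_j`.  The fixed field is described elementwise: `z` is fixed by
every `σ ∈ G` iff `z` lies in the intermediate field generated by the images of
the two invariant rings and `u_0`. -/
theorem invariantField_eq_adjoin (hn : 0 < n) (G : Subgroup (GL (Fin n) K)) (hG : Finite G)
    (z : FractionRing (MvPolynomial (Fin n ⊕ Fin n) K)) :
    (∀ σ ∈ G, gactFrac K n σ z = z) ↔
      z ∈ IntermediateField.adjoin K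
        (algebraMap (MvPolynomial (Fin n ⊕ Fin n) K)
            (FractionRing (MvPolynomial (Fin n ⊕ Fin n) K)) ''
          ({p | (∃ p₀ : MvPolynomial (Fin n) K, p = rename Sum.inl p₀) ∧
              ∀ σ ∈ G, gact K n σ p = p} ∪
            {p | (∃ p₀ : MvPolynomial (Fin n) K, p = rename Sum.inr p₀) ∧
              ∀ σ ∈ G, gact K n σ p = p} ∪
            {∑ j : Fin n, X (Sum.inl j) * X (Sum.inr j)})) := by
  classical
  letI : Finite ↥(G.prod G) := prod_finite K n G hG
  letI : FaithfulSMul ↥(G.prod G) (FractionRing (MvPolynomial (Fin n ⊕ Fin n) K)) :=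
    prodAction_faithful K n G
  set SS : Set (MvPolynomial (Fin n ⊕ Fin n) K) :=
    ({p | (∃ p₀ : MvPolynomial (Fin n) K, p = rename Sum.inl p₀) ∧
        ∀ σ ∈ G, gact K n σ p = p} ∪
      {p | (∃ p₀ : MvPolynomial (Fin n) K, p = rename Sum.inr p₀) ∧
        ∀ σ ∈ G, gact K n σ p = p} ∪
      {∑ j : Fin n, X (Sum.inl j) * X (Sum.inr j)}) with hSS
  set Sgen : Set (FractionRing (MvPolynomial (Fin n ⊕ Fin n) K)) :=
    (algebraMap (MvPolynomial (Fin n ⊕ Fin n) K)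
      (FractionRing (MvPolynomial (Fin n ⊕ Fin n) K))) '' SS with hSgen
  -- Step 1: fixed points of the big group lie in the adjoined field
  have hEF : ∀ w : FractionRing (MvPolynomial (Fin n ⊕ Fin n) K),
      (∀ h : ↥(G.prod G), h • w = w) → w ∈ IntermediateField.adjoin K Sgen := by
    intro w hw
    have hw' : ∀ σ ∈ G, ∀ τ ∈ G, gact2Frac K n σ τ w = w := by
      intro σ hσ τ hτ
      exact hw ⟨(σ, τ), ⟨hσ, hτ⟩⟩
    obtain ⟨P, Q, hPinv, hQinv, hQ0, hzQ⟩ := exists_invariant_rep K n G hG w hw'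
    have hmem : ∀ P₀ : MvPolynomial (Fin n ⊕ Fin n) K,
        (∀ σ ∈ G, ∀ τ ∈ G, gact2 K n σ τ P₀ = P₀) →
        algebraMap (MvPolynomial (Fin n ⊕ Fin n) K)
          (FractionRing (MvPolynomial (Fin n ⊕ Fin n) K)) P₀ ∈
          IntermediateField.adjoin K Sgen := by
      intro P₀ hinv
      have h1 := invariant_mem_adjoin K n G P₀ hinv
      have h2 : algebraMap (MvPolynomial (Fin n ⊕ Fin n) K)
          (FractionRing (MvPolynomial (Fin n ⊕ Fin n) K)) P₀ ∈
          Algebra.adjoin K ((algebraMap (MvPolynomial (Fin n ⊕ Fin n) K)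
            (FractionRing (MvPolynomial (Fin n ⊕ Fin n) K))) ''
            ({p | (∃ p₀ : MvPolynomial (Fin n) K, p = rename Sum.inl p₀) ∧
                ∀ σ ∈ G, gact K n σ p = p} ∪
              {p | (∃ p₀ : MvPolynomial (Fin n) K, p = rename Sum.inr p₀) ∧
                ∀ σ ∈ G, gact K n σ p = p})) := by
        rw [show ((algebraMap (MvPolynomial (Fin n ⊕ Fin n) K)
            (FractionRing (MvPolynomial (Fin n ⊕ Fin n) K))) :
              MvPolynomial (Fin n ⊕ Fin n) K →
                FractionRing (MvPolynomial (Fin n ⊕ Fin n) K)) =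
            (IsScalarTower.toAlgHom K (MvPolynomial (Fin n ⊕ Fin n) K)
              (FractionRing (MvPolynomial (Fin n ⊕ Fin n) K)) :
              MvPolynomial (Fin n ⊕ Fin n) K →ₐ[K] _) from rfl, ← AlgHom.map_adjoin]
        exact ⟨P₀, h1, rfl⟩
      have h3 : Algebra.adjoin K ((algebraMap (MvPolynomial (Fin n ⊕ Fin n) K)
          (FractionRing (MvPolynomial (Fin n ⊕ Fin n) K))) ''
          ({p | (∃ p₀ : MvPolynomial (Fin n) K, p = rename Sum.inl p₀) ∧
              ∀ σ ∈ G, gact K n σ p = p} ∪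
            {p | (∃ p₀ : MvPolynomial (Fin n) K, p = rename Sum.inr p₀) ∧
              ∀ σ ∈ G, gact K n σ p = p})) ≤
          Algebra.adjoin K Sgen :=
        Algebra.adjoin_mono (Set.image_mono Set.subset_union_left)
      exact IntermediateField.algebra_adjoin_le_adjoin K Sgen (h3 h2)
    have hPm := hmem P hPinv
    have hQm := hmem Q hQinv
    have hwPQ : w = algebraMap (MvPolynomial (Fin n ⊕ Fin n) K)
        (FractionRing (MvPolynomial (Fin n ⊕ Fin n) K)) P /
        algebraMap (MvPolynomial (Fin n ⊕ Fin n) K)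
          (FractionRing (MvPolynomial (Fin n ⊕ Fin n) K)) Q := by
      rw [eq_div_iff hQ0]
      exact hzQ
    rw [hwPQ]
    exact div_mem hPm hQm
  -- The adjoined field as an intermediate field over the fixed field
  set E := FixedPoints.subfield ↥(G.prod G)
    (FractionRing (MvPolynomial (Fin n ⊕ Fin n) K)) with hE
  set F' : IntermediateField ↥E (FractionRing (MvPolynomial (Fin n ⊕ Fin n) K)) :=
    Subfield.toIntermediateField (IntermediateField.adjoin K Sgen).toSubfield
      (fun e => hEF ↑e (fun h => e.2 h)) with hF'
  have hmemF' : ∀ x, x ∈ F' ↔ x ∈ IntermediateField.adjoin K Sgen := fun x => Iff.rfl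
  -- The diagonal subgroup of the Galois group
  set dgM : ↥G →* ↥(G.prod G) :=
    { toFun := fun g => ⟨(↑g, ↑g), ⟨g.2, g.2⟩⟩,
      map_one' := rfl,
      map_mul' := fun a b => rfl } with hdgM
  set diag : ↥G →* (FractionRing (MvPolynomial (Fin n ⊕ Fin n) K) ≃ₐ[↥E]
      FractionRing (MvPolynomial (Fin n ⊕ Fin n) K)) :=
    (MulSemiringAction.toAlgAut ↥(G.prod G) ↥E
      (FractionRing (MvPolynomial (Fin n ⊕ Fin n) K))).comp dgM with hdiag
  have hdiag_apply : ∀ (σ : ↥G) (x : FractionRing (MvPolynomial (Fin n ⊕ Fin n) K)),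
      diag σ x = gactFrac K n ↑σ x := by
    intro σ x
    show (dgM σ) • x = _
    rw [prodAction_smul_def]
    show gact2Frac K n ↑σ ↑σ x = _
    rw [gact2Frac_diag]
  -- every diagonal element fixes the adjoined field pointwise
  have hfixgen : ∀ (σ : ↥G) (x : FractionRing (MvPolynomial (Fin n ⊕ Fin n) K)),
      x ∈ IntermediateField.adjoin K Sgen → gactFrac K n ↑σ x = x := by
    intro σ x hx
    let T : Subfield (FractionRing (MvPolynomial (Fin n ⊕ Fin n) K)) :=
      { carrier := {x | gactFrac K n ↑σ x = x}
        mul_mem' := fun ha hb => by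
          simp only [Set.mem_setOf_eq] at *
          rw [_root_.map_mul, ha, hb]
        one_mem' := map_one _
        add_mem' := fun ha hb => by
          simp only [Set.mem_setOf_eq] at *
          rw [map_add, ha, hb]
        zero_mem' := map_zero _
        neg_mem' := fun ha => by
          simp only [Set.mem_setOf_eq] at *
          rw [map_neg, ha]
        inv_mem' := fun y hy => by
          simp only [Set.mem_setOf_eq] at *
          rw [map_inv₀, hy] }
    have hT : IntermediateField.adjoin K Sgen ≤
        Subfield.toIntermediateField T (fun c => (gactFrac K n ↑σ).commutes c) := by
      rw [IntermediateField.adjoin_le_iff]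
      rintro _ ⟨p, hp, rfl⟩
      show gactFrac K n ↑σ (algebraMap _ _ p) = algebraMap _ _ p
      rw [gactFrac_algebraMap]
      congr 1
      rcases hp with (h | h) | h
      · exact h.2 ↑σ σ.2
      · exact h.2 ↑σ σ.2
      · rw [Set.mem_singleton_iff] at h
        rw [h]
        exact gact_u0 K n ↑σ
    exact hT hx
  -- identification of the fixing subgroup with the diagonal
  have hfix : IntermediateField.fixingSubgroup F' = diag.range := by
    apply le_antisymm
    · intro g hg
      rw [IntermediateField.mem_fixingSubgroup_iff] at hg
      obtain ⟨h, rfl⟩ := FixedPoints.toAlgAut_surjective ↥(G.prod G)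
        (FractionRing (MvPolynomial (Fin n ⊕ Fin n) K)) g
      have hu0 : algebraMap (MvPolynomial (Fin n ⊕ Fin n) K)
          (FractionRing (MvPolynomial (Fin n ⊕ Fin n) K))
          (∑ j : Fin n, X (Sum.inl j) * X (Sum.inr j)) ∈ F' := by
        rw [hmemF']
        exact IntermediateField.subset_adjoin K Sgen
          ⟨∑ j : Fin n, X (Sum.inl j) * X (Sum.inr j), Or.inr rfl, rfl⟩
      have hfixu := hg _ hu0
      have hfixu' : gact2Frac K n (h : GL (Fin n) K × GL (Fin n) K).1
          (h : GL (Fin n) K × GL (Fin n) K).2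
          (algebraMap (MvPolynomial (Fin n ⊕ Fin n) K)
            (FractionRing (MvPolynomial (Fin n ⊕ Fin n) K))
            (∑ j : Fin n, X (Sum.inl j) * X (Sum.inr j))) =
          algebraMap (MvPolynomial (Fin n ⊕ Fin n) K)
            (FractionRing (MvPolynomial (Fin n ⊕ Fin n) K))
            (∑ j : Fin n, X (Sum.inl j) * X (Sum.inr j)) := hfixu
      rw [gact2Frac_algebraMap] at hfixu'
      have heq := eq_of_gact2_u0 K n _ _
        (IsFractionRing.injective (MvPolynomial (Fin n ⊕ Fin n) K)
          (FractionRing (MvPolynomial (Fin n ⊕ Fin n) K)) hfixu')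
      refine ⟨⟨(h : GL (Fin n) K × GL (Fin n) K).1, h.2.1⟩, ?_⟩
      show MulSemiringAction.toAlgAut ↥(G.prod G) ↥E _ (dgM _) = _
      congr 1
      apply Subtype.ext
      apply Prod.ext
      · rfl
      · exact heq
    · rintro g ⟨σ', rfl⟩
      rw [IntermediateField.mem_fixingSubgroup_iff]
      intro x hx
      have : diag σ' x = x := by
        rw [hdiag_apply]
        exact hfixgen σ' x ((hmemF' x).mp hx)
      exact this
  have hFF := IsGalois.fixedField_fixingSubgroup F'
  rw [hfix] at hFF
  -- final equivalence
  constructor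
  · intro hz
    have hzfix : z ∈ IntermediateField.fixedField diag.range := by
      rintro ⟨g, ⟨σ', rfl⟩⟩
      show diag σ' z = z
      rw [hdiag_apply]
      exact hz ↑σ' σ'.2
    rw [hFF] at hzfix
    exact (hmemF' z).mp hzfix
  · intro hz σ hσ
    have hzF : z ∈ IntermediateField.fixedField diag.range := by
      rw [hFF]
      exact (hmemF' z).mpr hz
    have := hzF ⟨diag ⟨σ, hσ⟩, ⟨⟨σ, hσ⟩, rfl⟩⟩
    rw [← hdiag_apply ⟨σ, hσ⟩ z]
    exact this
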